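/- Let v1 ≥ v2 > 2 with v2/2 not an integer and ⌊v1/2⌋ = ⌊v2/2⌋, and set m = ⌊v2/2⌋. A strategy profile (X, Y) is a Nash equilibrium of the two-player all-pay auction with valuations (v1, v2) if and only if X = λ·U_O^m + (1−λ)·U_E^m and Y = κ·U_O^m + (1−κ)·U_E^m, where κ = (⌊v1/2⌋/(v1/2))·(⌈v1/2⌉ − v1/2) and λ = (⌊v2/2⌋/(v2/2))·(⌈v2/2⌉ − v2/2). The equilibrium payoffs are P_{v1}(X, Y) = v1/2 − ⌊v2/2⌋ and P_{v2}(Y, X) = v2/2 − ⌊v2/2⌋. -/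

import Mathlib

open scoped BigOperators

/-- A (mixed) strategy: a probability distribution on the nonnegative
integers with finite expectation. -/
structure Strategy where
  p : ℕ → ℝ
  nonneg : ∀ n, 0 ≤ p n
  total : HasSum p 1
  finExp : Summable fun n : ℕ => (n : ℝ) * p n

namespace Strategy

/-- Expectation of a strategy. -/
noncomputable def exp (ξ : Strategy) : ℝ := ∑' n : ℕ, (n : ℝ) * ξ.p n

end Strategy

/-- Probability that an observation from `ξ` strictly exceeds an independent
observation from `η`. -/
noncomputable def prGT (ξ η : Strategy) : ℝ :=
  ∑' n, ξ.p n * ∑ k ∈ Finset.range n, η.p k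

/-- Probability that independent observations from `ξ` and `η` are equal. -/
noncomputable def prEq (ξ η : Strategy) : ℝ := ∑' n, ξ.p n * η.p n

/-- Expected all-pay auction payoff of a player with valuation `v` playing `ξ`
against `η`:  `v·Pr(X > Y) + (v/2)·Pr(X = Y) − E(X)`. -/
noncomputable def payoff (v : ℝ) (ξ η : Strategy) : ℝ :=
  v * prGT ξ η + v / 2 * prEq ξ η - ξ.exp

/-- Nash equilibrium of the two-player all-pay auction with valuations `(v1, v2)`. -/
def IsNashAPA (v1 v2 : ℝ) (X Y : Strategy) : Prop :=
  (∀ X' : Strategy, payoff v1 X' Y ≤ payoff v1 X Y) ∧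
  (∀ Y' : Strategy, payoff v2 Y' X ≤ payoff v2 Y X)

/-- `H(ξ, η) = Pr(X > Y) − Pr(X < Y)`. -/
noncomputable def Hval (ξ η : Strategy) : ℝ := prGT ξ η - prGT η ξ

/-- Nash equilibrium of the discrete General Lotto game `Γ(b1, b2)`. -/
def IsNashLotto (b1 b2 : ℝ) (X Y : Strategy) : Prop :=
  X.exp = b1 ∧ Y.exp = b2 ∧
  (∀ X' : Strategy, X'.exp = b1 → Hval X' Y ≤ Hval X Y) ∧
  (∀ Y' : Strategy, Y'.exp = b2 → Hval Y' X ≤ Hval Y X)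

/-- `U_O^m`: uniform distribution on the odd numbers `{1, 3, …, 2m−1}` (as a pmf). -/
noncomputable def UO (m : ℕ) : ℕ → ℝ := fun n =>
  if Odd n ∧ n < 2 * m then (m : ℝ)⁻¹ else 0

/-- `U_E^m`: uniform distribution on the even numbers `{0, 2, …, 2m}` (as a pmf). -/
noncomputable def UE (m : ℕ) : ℕ → ℝ := fun n =>
  if Even n ∧ n ≤ 2 * m then ((m : ℝ) + 1)⁻¹ else 0

/-- `U_{O↑1}^m`: uniform distribution on the even numbers `{2, 4, …, 2m−2}` (as a pmf). -/
noncomputable def UOup (m : ℕ) : ℕ → ℝ := fun n =>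
  if Even n ∧ 0 < n ∧ n ≤ 2 * m - 2 then ((m : ℝ) - 1)⁻¹ else 0

/-- `δ_j`: the point mass at `j` (as a pmf). -/
noncomputable def deltaFn (j : ℕ) : ℕ → ℝ := fun n => if n = j then 1 else 0

/-- `W_j^m = (1/(2m))·δ_0 + Σ_{i=1}^{j−1}(1/m)·δ_{2i} + (1/(2m))·δ_{2j}
      + Σ_{i=j+1}^{m}(1/m)·δ_{2i−1}` (as a pmf). -/
noncomputable def Wfn (j m : ℕ) : ℕ → ℝ := fun n =>
  if n = 0 ∨ n = 2 * j then (2 * (m : ℝ))⁻¹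
  else if Even n ∧ n < 2 * j then (m : ℝ)⁻¹
  else if Odd n ∧ 2 * j < n ∧ n < 2 * m then (m : ℝ)⁻¹
  else 0

/-- `V_j^m = Σ_{i=1}^{j−1}(2/(2m+1))·δ_{2i−1} + (1/(2m+1))·δ_{2j−1}
      + Σ_{i=j}^{m}(2/(2m+1))·δ_{2i}` (as a pmf). -/
noncomputable def Vfn (j m : ℕ) : ℕ → ℝ := fun n =>
  if n = 2 * j - 1 then (2 * (m : ℝ) + 1)⁻¹
  else if Odd n ∧ n < 2 * j - 1 then 2 * (2 * (m : ℝ) + 1)⁻¹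
  else if Even n ∧ 2 * j ≤ n ∧ n ≤ 2 * m then 2 * (2 * (m : ℝ) + 1)⁻¹
  else 0

namespace APAProof

open Filter Finset

/-- CDF-like: probability of being `< n`. -/
noncomputable def F (ξ : Strategy) (n : ℕ) : ℝ := ∑ k ∈ Finset.range n, ξ.p k

lemma F_succ (ξ : Strategy) (n : ℕ) : F ξ (n + 1) = F ξ n + ξ.p n :=
  Finset.sum_range_succ _ n

lemma summable_p (ξ : Strategy) : Summable ξ.p := ξ.total.summable

lemma tsum_p (ξ : Strategy) : ∑' n, ξ.p n = 1 := ξ.total.tsum_eq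

lemma p_le_one (ξ : Strategy) (n : ℕ) : ξ.p n ≤ 1 :=
  le_hasSum ξ.total n (fun j _ => ξ.nonneg j)

lemma F_nonneg (ξ : Strategy) (n : ℕ) : 0 ≤ F ξ n :=
  Finset.sum_nonneg fun k _ => ξ.nonneg k

lemma F_le_one (ξ : Strategy) (n : ℕ) : F ξ n ≤ 1 :=
  sum_le_hasSum _ (fun i _ => ξ.nonneg i) ξ.total

lemma summable_mul_F (ξ η : Strategy) : Summable fun n => ξ.p n * F η n :=
  (summable_p ξ).of_nonneg_of_le
    (fun n => mul_nonneg (ξ.nonneg n) (F_nonneg η n))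
    (fun n => by
      have := F_le_one η n
      nlinarith [ξ.nonneg n, F_nonneg η n])

lemma summable_mul_p (ξ η : Strategy) : Summable fun n => ξ.p n * η.p n :=
  (summable_p ξ).of_nonneg_of_le
    (fun n => mul_nonneg (ξ.nonneg n) (η.nonneg n))
    (fun n => by nlinarith [ξ.nonneg n, η.nonneg n, p_le_one η n])

/-- the payoff of the pure bid `n` for a player with valuation `v` against `η`. -/
noncomputable def sc (v : ℝ) (η : Strategy) (n : ℕ) : ℝ := v * (F η n + η.p n / 2) - n

lemma prGT_eq (ξ η : Strategy) : prGT ξ η = ∑' n, ξ.p n * F η n := rfl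

lemma payoff_eq_tsum (v : ℝ) (ξ η : Strategy) :
    payoff v ξ η = ∑' n, ξ.p n * sc v η n := by
  have h1 : Summable fun n => v * (ξ.p n * F η n) := (summable_mul_F ξ η).mul_left v
  have h2 : Summable fun n => v / 2 * (ξ.p n * η.p n) := (summable_mul_p ξ η).mul_left (v / 2)
  have h3 : Summable fun n : ℕ => (n : ℝ) * ξ.p n := ξ.finExp
  calc payoff v ξ η
      = v * ∑' n, ξ.p n * F η n + v / 2 * ∑' n, ξ.p n * η.p n - ∑' n : ℕ, (n : ℝ) * ξ.p n := rfl
    _ = ∑' n, (v * (ξ.p n * F η n) + v / 2 * (ξ.p n * η.p n) - (n : ℝ) * ξ.p n) := by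
        rw [Summable.tsum_sub (h1.add h2) h3, Summable.tsum_add h1 h2, tsum_mul_left, tsum_mul_left]
    _ = ∑' n, ξ.p n * sc v η n := by
        apply tsum_congr; intro n; simp only [sc]; ring

lemma summable_mul_sc (v : ℝ) (ξ η : Strategy) : Summable fun n => ξ.p n * sc v η n := by
  have h1 : Summable fun n => v * (ξ.p n * F η n) := (summable_mul_F ξ η).mul_left v
  have h2 : Summable fun n => v / 2 * (ξ.p n * η.p n) := (summable_mul_p ξ η).mul_left (v / 2)
  have h3 : Summable fun n : ℕ => (n : ℝ) * ξ.p n := ξ.finExp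
  have : Summable fun n : ℕ =>
      (v * (ξ.p n * F η n) + v / 2 * (ξ.p n * η.p n) - (n : ℝ) * ξ.p n) := (h1.add h2).sub h3
  apply this.congr
  intro n; simp only [sc]; ring

lemma payoff_le (v A : ℝ) (ξ η : Strategy) (h : ∀ n, sc v η n ≤ A) :
    payoff v ξ η ≤ A := by
  rw [payoff_eq_tsum]
  calc ∑' n, ξ.p n * sc v η n ≤ ∑' n, ξ.p n * A := by
        apply Summable.tsum_le_tsum _ (summable_mul_sc v ξ η) ((summable_p ξ).mul_right A)
        intro n
        exact mul_le_mul_of_nonneg_left (h n) (ξ.nonneg n)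
    _ = A := by rw [tsum_mul_right, tsum_p, one_mul]

/-- point mass strategy -/
noncomputable def delta (j : ℕ) : Strategy where
  p := deltaFn j
  nonneg := fun n => by unfold deltaFn; positivity
  total := by exact hasSum_ite_eq j (1:ℝ)
  finExp := by
    apply summable_of_ne_finset_zero (s := {j})
    intro n hn
    simp only [Finset.mem_singleton] at hn
    simp [deltaFn, hn]

lemma payoff_delta (v : ℝ) (j : ℕ) (η : Strategy) :
    payoff v (delta j) η = sc v η j := by
  rw [payoff_eq_tsum]
  rw [tsum_eq_single j]
  · simp [delta, deltaFn]
  · intro n hn; simp [delta, deltaFn, hn]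

end APAProof
namespace APAProof

open Filter Finset

lemma tendsto_F (ξ : Strategy) : Tendsto (fun n => F ξ n) atTop (nhds 1) :=
  ξ.total.tendsto_sum_nat

lemma sum_three (ξ η : Strategy) : prGT ξ η + prGT η ξ + prEq ξ η = 1 := by
  set f : ℕ → ℝ := fun n => ξ.p n * F η n + η.p n * F ξ n + ξ.p n * η.p n with hf
  have hsum : Summable f :=
    ((summable_mul_F ξ η).add (summable_mul_F η ξ)).add (summable_mul_p ξ η)
  have hpart : ∀ N, ∑ n ∈ Finset.range N, f n = F ξ N * F η N := by
    intro N
    induction N with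
    | zero => simp [F]
    | succ N ih =>
        rw [Finset.sum_range_succ, ih, F_succ, F_succ, hf]
        ring
  have ht : Tendsto (fun N => ∑ n ∈ Finset.range N, f n) atTop (nhds 1) := by
    simp only [hpart]
    simpa using (tendsto_F ξ).mul (tendsto_F η)
  have h1 : ∑' n, f n = 1 := tendsto_nhds_unique hsum.hasSum.tendsto_sum_nat ht
  have h2 : ∑' n, f n = prGT ξ η + prGT η ξ + prEq ξ η := by
    rw [hf, Summable.tsum_add ((summable_mul_F ξ η).add (summable_mul_F η ξ)) (summable_mul_p ξ η),
      Summable.tsum_add (summable_mul_F ξ η) (summable_mul_F η ξ)]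
    rfl
  rw [← h2, h1]

lemma prEq_comm (ξ η : Strategy) : prEq ξ η = prEq η ξ := by
  unfold prEq
  exact tsum_congr fun n => mul_comm _ _

lemma payoff_eq_H (v : ℝ) (ξ η : Strategy) :
    payoff v ξ η = v / 2 * (1 + Hval ξ η) - ξ.exp := by
  have h := sum_three ξ η
  have hE : prEq ξ η = 1 - prGT ξ η - prGT η ξ := by linarith
  unfold payoff Hval
  rw [hE]
  ring

/-- zero-sum kernel -/
noncomputable def lam (v1 v2 : ℝ) (ξ η : Strategy) : ℝ :=
  v2 * payoff v1 ξ η + v1 * η.exp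

lemma identityI (v1 v2 : ℝ) (ξ η : Strategy) :
    v2 * payoff v1 ξ η + v1 * payoff v2 η ξ = v1 * v2 - v2 * ξ.exp - v1 * η.exp := by
  have h1 := payoff_eq_H v1 ξ η
  have h2 := payoff_eq_H v2 η ξ
  have h3 : Hval η ξ = - Hval ξ η := by unfold Hval; ring
  rw [h1, h2, h3]
  ring

lemma lam_eq_two (v1 v2 : ℝ) (ξ η : Strategy) :
    lam v1 v2 ξ η = v1 * v2 - v2 * ξ.exp - v1 * payoff v2 η ξ := by
  have := identityI v1 v2 ξ η
  unfold lam
  linarith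

lemma nash_iff_saddle (v1 v2 : ℝ) (hv1 : 0 < v1) (hv2 : 0 < v2) (X Y : Strategy) :
    IsNashAPA v1 v2 X Y ↔
      ((∀ X', lam v1 v2 X' Y ≤ lam v1 v2 X Y) ∧ (∀ Y', lam v1 v2 X Y ≤ lam v1 v2 X Y')) := by
  constructor
  · rintro ⟨h1, h2⟩
    constructor
    · intro X'
      unfold lam
      have := h1 X'
      nlinarith
    · intro Y'
      rw [lam_eq_two, lam_eq_two]
      have := h2 Y'
      nlinarith
  · rintro ⟨h1, h2⟩
    constructor
    · intro X'
      have := h1 X'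
      unfold lam at this
      nlinarith
    · intro Y'
      have := h2 Y'
      rw [lam_eq_two, lam_eq_two] at this
      nlinarith

lemma interchange (v1 v2 : ℝ) (hv1 : 0 < v1) (hv2 : 0 < v2) (X Y Xs Ys : Strategy)
    (h : IsNashAPA v1 v2 X Y) (hs : IsNashAPA v1 v2 Xs Ys) :
    IsNashAPA v1 v2 X Ys ∧ IsNashAPA v1 v2 Xs Y := by
  rw [nash_iff_saddle v1 v2 hv1 hv2] at h hs
  obtain ⟨h1, h2⟩ := h
  obtain ⟨s1, s2⟩ := hs
  have e1 : lam v1 v2 X Y ≤ lam v1 v2 X Ys := h2 Ys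
  have e2 : lam v1 v2 X Ys ≤ lam v1 v2 Xs Ys := s1 X
  have e3 : lam v1 v2 Xs Ys ≤ lam v1 v2 Xs Y := s2 Y
  have e4 : lam v1 v2 Xs Y ≤ lam v1 v2 X Y := h1 Xs
  have q1 : lam v1 v2 X Y = lam v1 v2 X Ys := le_antisymm e1 (by linarith)
  have q2 : lam v1 v2 X Ys = lam v1 v2 Xs Ys := le_antisymm e2 (by linarith)
  have q3 : lam v1 v2 Xs Ys = lam v1 v2 Xs Y := le_antisymm e3 (by linarith)
  constructor
  · rw [nash_iff_saddle v1 v2 hv1 hv2]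
    constructor
    · intro X'; exact le_trans (s1 X') (by linarith)
    · intro Y'; calc lam v1 v2 X Ys = lam v1 v2 X Y := q1.symm
        _ ≤ lam v1 v2 X Y' := h2 Y'
  · rw [nash_iff_saddle v1 v2 hv1 hv2]
    constructor
    · intro X'; exact le_trans (h1 X') (by linarith)
    · intro Y'; calc lam v1 v2 Xs Y = lam v1 v2 Xs Ys := q3.symm
        _ ≤ lam v1 v2 Xs Y' := s2 Y'

end APAProof
namespace APAProof

open Filter Finset

/-- alternating pattern supported on `{0,…,2m}` -/
noncomputable def pat (a b : ℝ) (m : ℕ) : ℕ → ℝ := fun n =>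
  if n ≤ 2*m then (if Even n then a else b) else 0

lemma pat_sum (a b : ℝ) (m : ℕ) :
    ∑ k ∈ Finset.range (2*m+1), pat a b m k = (m+1)*a + m*b := by
  induction m with
  | zero => simp [pat]
  | succ m ih =>
      have h1 : 2*(m+1)+1 = (2*m+1) + 1 + 1 := by ring
      rw [h1, Finset.sum_range_succ, Finset.sum_range_succ]
      have h2 : ∑ k ∈ Finset.range (2*m+1), pat a b (m+1) k
          = ∑ k ∈ Finset.range (2*m+1), pat a b m k := by
        apply Finset.sum_congr rfl
        intro k hk
        simp only [Finset.mem_range] at hk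
        have hk' : k ≤ 2*m := by omega
        have hk2 : k ≤ 2*(m+1) := by omega
        simp [pat, hk', hk2]
      rw [h2, ih]
      have e1 : ¬ Even (2*m+1) := by simp [Nat.even_add_one, parity_simps]
      have e2 : Even (2*m+1+1) := by simp [Nat.even_add_one, parity_simps]
      have l1 : 2*m+1 ≤ 2*(m+1) := by omega
      have l2 : 2*m+1+1 ≤ 2*(m+1) := by omega
      simp only [pat, e1, e2, if_true, if_false, l1, l2]
      push_cast
      ring

lemma pat_zero_of_gt (a b : ℝ) (m : ℕ) {n : ℕ} (h : 2*m < n) : pat a b m n = 0 := by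
  simp [pat, Nat.not_le.mpr h]

/-- the equilibrium pattern for parameter `t ∈ (m, m+1)` -/
noncomputable def mix (t : ℝ) (m : ℕ) : ℕ → ℝ := pat ((t - m)/t) ((m + 1 - t)/t) m

lemma mix_zero_of_gt (t : ℝ) (m : ℕ) {n : ℕ} (h : 2*m < n) : mix t m n = 0 :=
  pat_zero_of_gt _ _ _ h

section mix

variable {t : ℝ} {m : ℕ}

variable (ht1 : (m:ℝ) < t) (ht2 : t < m + 1)

include ht1 ht2

omit ht2 in
lemma t_pos : 0 < t := lt_of_le_of_lt (Nat.cast_nonneg m) ht1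

lemma mix_nonneg : ∀ n, 0 ≤ mix t m n := by
  intro n
  have h0 := t_pos ht1
  unfold mix pat
  have h1 : 0 ≤ (t - m)/t := div_nonneg (by linarith) h0.le
  have h2 : 0 ≤ (m + 1 - t)/t := div_nonneg (by linarith) h0.le
  split <;> [skip; rfl]
  split <;> assumption

lemma mix_sum : ∑ k ∈ Finset.range (2*m+1), mix t m k = 1 := by
  have h0 := t_pos ht1
  unfold mix
  rw [pat_sum]
  field_simp
  ring

lemma mix_hasSum : HasSum (mix t m) 1 := by
  have h := hasSum_sum_of_ne_finset_zero (f := mix t m) (s := Finset.range (2*m+1)) (L := SummationFilter.unconditional ℕ)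
    (by intro n hn
        simp only [Finset.mem_range] at hn
        exact mix_zero_of_gt _ _ (by omega))
  rwa [mix_sum ht1 ht2] at h

/-- the equilibrium strategy -/
noncomputable def mixStrat : Strategy where
  p := mix t m
  nonneg := mix_nonneg ht1 ht2
  total := mix_hasSum ht1 ht2
  finExp := by
    apply summable_of_ne_finset_zero (s := Finset.range (2*m+1))
    intro n hn
    simp only [Finset.mem_range] at hn
    rw [mix_zero_of_gt _ _ (by omega : 2*m < n), mul_zero]

section scmix

variable {η : Strategy} (hη : ∀ n, η.p n = mix t m n)

include hη

lemma mix_pair_sum {n : ℕ} (h : n + 1 ≤ 2*m) : η.p n + η.p (n+1) = 1/t := by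
  have h0 := t_pos ht1
  rw [hη, hη]
  unfold mix pat
  rcases Nat.even_or_odd n with he | ho
  · have he1 : ¬ Even (n+1) := by simp [Nat.even_add_one, he]
    simp only [he, he1, if_true, if_false, (by omega : n ≤ 2*m), h, if_true]
    field_simp
    ring
  · have ho1 : ¬ Even n := Nat.not_even_iff_odd.mpr ho
    have he1 : Even (n+1) := by simp [Nat.even_add_one, ho1]
    simp only [ho1, he1, if_true, if_false, (by omega : n ≤ 2*m), h, if_true]
    field_simp
    ring

lemma mix_F_total {n : ℕ} (h : 2*m+1 ≤ n) : F η n = 1 := by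
  have : F η n = ∑ k ∈ Finset.range (2*m+1), η.p k := by
    unfold F
    rw [← Finset.sum_subset (Finset.range_subset_range.mpr h)]
    intro k _ hk
    simp only [Finset.mem_range] at hk
    rw [hη]
    exact mix_zero_of_gt _ _ (by omega)
  rw [this]
  calc ∑ k ∈ Finset.range (2*m+1), η.p k = ∑ k ∈ Finset.range (2*m+1), mix t m k :=
        Finset.sum_congr rfl (fun k _ => hη k)
    _ = 1 := mix_sum ht1 ht2

lemma sc_mix_eq : ∀ n, n ≤ 2*m → sc (2*t) η n = t - m := by
  intro n
  induction n with
  | zero =>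
      intro _
      have h0 := t_pos ht1
      have : η.p 0 = (t - m)/t := by rw [hη]; simp [mix, pat]
      unfold sc F
      rw [this]
      push_cast
      field_simp
      ring
  | succ n ih =>
      intro hn
      have hscn := ih (by omega)
      have hpair := mix_pair_sum ht1 ht2 hη (by omega : n + 1 ≤ 2*m)
      have h0 := t_pos ht1
      have : sc (2*t) η (n+1) - sc (2*t) η n = t * (η.p n + η.p (n+1)) - 1 := by
        unfold sc
        rw [F_succ]
        push_cast
        ring
      rw [hpair] at this
      have : sc (2*t) η (n+1) = sc (2*t) η n := by
        field_simp at this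
        linarith
      rw [this, hscn]

lemma sc_mix_tail : ∀ n, 2*m+1 ≤ n → sc (2*t) η n = 2*t - n := by
  intro n hn
  have hF := mix_F_total ht1 ht2 hη hn
  have hp : η.p n = 0 := by rw [hη]; exact mix_zero_of_gt _ _ (by omega)
  unfold sc
  rw [hF, hp]
  ring

lemma sc_mix_le : ∀ n, sc (2*t) η n ≤ t - m := by
  intro n
  rcases le_or_gt n (2*m) with h | h
  · exact le_of_eq (sc_mix_eq ht1 ht2 hη n h)
  · rw [sc_mix_tail ht1 ht2 hη n (by omega)]
    have : (2*m+1 : ℝ) ≤ (n:ℝ) := by exact_mod_cast h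
    push_cast at this ⊢
    linarith

lemma sc_mix_lt_tail : ∀ n, 2*m < n → sc (2*t) η n < t - m := by
  intro n h
  rw [sc_mix_tail ht1 ht2 hη n (by omega)]
  have : (2*m+1 : ℝ) ≤ (n:ℝ) := by exact_mod_cast h
  push_cast at this ⊢
  linarith

/-- payoff of any strategy supported on `{0,…,2m}` against the mix is `t - m`. -/
lemma payoff_vs_mix (ξ : Strategy) (hξ : ∀ n, 2*m < n → ξ.p n = 0) :
    payoff (2*t) ξ η = t - m := by
  rw [payoff_eq_tsum]
  have : ∀ n, ξ.p n * sc (2*t) η n = ξ.p n * (t - m) := by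
    intro n
    rcases le_or_gt n (2*m) with h | h
    · rw [sc_mix_eq ht1 ht2 hη n h]
    · rw [hξ n h]; ring
  rw [tsum_congr this, tsum_mul_right, tsum_p, one_mul]

end scmix

end mix

end APAProof
namespace APAProof

open Filter Finset

lemma sc_eq_of_pos {v A : ℝ} {ξ η : Strategy} (hub : ∀ n, sc v η n ≤ A)
    (hval : payoff v ξ η = A) {n0 : ℕ} (hpos : 0 < ξ.p n0) : sc v η n0 = A := by
  refine le_antisymm (hub n0) ?_
  by_contra hlt
  push_neg at hlt
  have h1 : ∑' n, ξ.p n * sc v η n < ∑' n, ξ.p n * A := by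
    refine Summable.tsum_lt_tsum (f := fun n => ξ.p n * sc v η n) (g := fun n => ξ.p n * A)
      (i := n0) ?_ (mul_lt_mul_of_pos_left hlt hpos)
      (summable_mul_sc v ξ η) ((summable_p ξ).mul_right A)
    intro n
    exact mul_le_mul_of_nonneg_left (hub n) (ξ.nonneg n)
  rw [← payoff_eq_tsum, hval, tsum_mul_right, tsum_p, one_mul] at h1
  exact lt_irrefl A h1

lemma p_eq_zero_of_lt {v A : ℝ} {ξ η : Strategy} (hub : ∀ n, sc v η n ≤ A)
    (hval : payoff v ξ η = A) {n0 : ℕ} (hlt : sc v η n0 < A) : ξ.p n0 = 0 := by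
  by_contra hne
  have hpos : 0 < ξ.p n0 := lt_of_le_of_ne (ξ.nonneg n0) (Ne.symm hne)
  exact absurd (sc_eq_of_pos hub hval hpos) (ne_of_lt hlt)

lemma sc_diff (v : ℝ) (η : Strategy) (n : ℕ) :
    sc v η (n+1) - sc v η n = v * (η.p n + η.p (n+1)) / 2 - 1 := by
  unfold sc
  rw [F_succ]
  push_cast
  ring

lemma mix_pos {t : ℝ} {m : ℕ} (ht1 : (m:ℝ) < t) (ht2 : t < m + 1) {n : ℕ} (hn : n ≤ 2*m) :
    0 < mix t m n := by
  have h0 := t_pos ht1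
  unfold mix pat
  rw [if_pos hn]
  split
  · exact div_pos (by linarith) h0
  · exact div_pos (by linarith) h0

lemma pat_of_pairs {m : ℕ} {c : ℝ} {g : ℕ → ℝ}
    (hpair : ∀ n, n + 1 ≤ 2*m → g n + g (n+1) = c) :
    ∀ n, n ≤ 2*m → g n = if Even n then g 0 else c - g 0 := by
  intro n
  induction n with
  | zero => intro _; simp
  | succ n ih =>
      intro hn
      have h1 := hpair n (by omega)
      have h2 := ih (by omega)
      rcases Nat.even_or_odd n with he | ho
      · have : ¬ Even (n+1) := by simp [Nat.even_add_one, he]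
        rw [if_neg this]
        rw [if_pos he] at h2
        linarith
      · have ho1 : ¬ Even n := Nat.not_even_iff_odd.mpr ho
        have : Even (n+1) := by simp [Nat.even_add_one, ho1]
        rw [if_pos this]
        rw [if_neg ho1] at h2
        linarith

lemma sum_range_eq_one {m : ℕ} (ξ : Strategy) (h0 : ∀ n, 2*m < n → ξ.p n = 0) :
    ∑ k ∈ Finset.range (2*m+1), ξ.p k = 1 := by
  have h := hasSum_sum_of_ne_finset_zero (f := ξ.p) (s := Finset.range (2*m+1)) (L := SummationFilter.unconditional ℕ)
    (by intro n hn
        simp only [Finset.mem_range] at hn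
        exact h0 n (by omega))
  exact h.unique ξ.total

/-- From constancy of the score on `{0,…,2m}` plus support condition, the
strategy is the mix. -/
lemma strategy_eq_mix {v t : ℝ} {m : ℕ} (ht1 : (m:ℝ) < t) (ht2 : t < m + 1)
    (hv : v = 2*t) {ξ : Strategy} {A : ℝ}
    (hconst : ∀ n, n ≤ 2*m → sc v ξ n = A)
    (htail : ∀ n, 2*m < n → ξ.p n = 0) :
    ∀ n, ξ.p n = mix t m n := by
  have h0 := t_pos ht1
  have hpair : ∀ n, n + 1 ≤ 2*m → ξ.p n + ξ.p (n+1) = 1/t := by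
    intro n hn
    have d := sc_diff v ξ n
    rw [hconst (n+1) hn, hconst n (by omega)] at d
    rw [hv] at d
    have hts : t * (ξ.p n + ξ.p (n+1)) = 1 := by linarith
    rw [eq_div_iff h0.ne']
    linarith [mul_comm (ξ.p n + ξ.p (n+1)) t]
  have hpat := pat_of_pairs (m := m) (c := 1/t) hpair
  have hsum := sum_range_eq_one (m := m) ξ htail
  have hsum2 : ∑ k ∈ Finset.range (2*m+1), pat (ξ.p 0) (1/t - ξ.p 0) m k
      = ∑ k ∈ Finset.range (2*m+1), ξ.p k := by
    apply Finset.sum_congr rfl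
    intro k hk
    simp only [Finset.mem_range] at hk
    have hk' : k ≤ 2*m := by omega
    rw [pat, if_pos hk', ← hpat k hk']
  rw [hsum, pat_sum] at hsum2
  have hp0 : ξ.p 0 = (t - m)/t := by
    have : (m:ℝ) + 1 ≠ 0 := by positivity
    field_simp at hsum2 ⊢
    linarith
  intro n
  rcases le_or_gt n (2*m) with h | h
  · rw [hpat n h]
    unfold mix pat
    rw [if_pos h]
    rcases Nat.even_or_odd n with he | ho
    · rw [if_pos he, if_pos he, hp0]
    · have ho1 : ¬ Even n := Nat.not_even_iff_odd.mpr ho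
      rw [if_neg ho1, if_neg ho1, hp0]
      field_simp
      ring
  · rw [htail n h, mix_zero_of_gt _ _ h]

/-- Forward direction: the pair of mixes is a Nash equilibrium. -/
lemma nash_of_mix (v1 v2 : ℝ) (m : ℕ)
    (hu0 : (m:ℝ) < v1/2) (hu1 : v1/2 < m + 1)
    (hw0 : (m:ℝ) < v2/2) (hw1 : v2/2 < m + 1)
    (X Y : Strategy) (hX : ∀ n, X.p n = mix (v2/2) m n) (hY : ∀ n, Y.p n = mix (v1/2) m n) :
    IsNashAPA v1 v2 X Y := by
  have hv1 : v1 = 2*(v1/2) := by ring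
  have hv2 : v2 = 2*(v2/2) := by ring
  constructor
  · intro X'
    have hle : payoff v1 X' Y ≤ v1/2 - m := by
      apply payoff_le
      intro n
      have := sc_mix_le hu0 hu1 hY n
      rwa [← hv1] at this
    have heq : payoff v1 X Y = v1/2 - m := by
      have := payoff_vs_mix hu0 hu1 hY X
        (fun n hn => by rw [hX n]; exact mix_zero_of_gt _ _ hn)
      rwa [← hv1] at this
    linarith
  · intro Y'
    have hle : payoff v2 Y' X ≤ v2/2 - m := by
      apply payoff_le
      intro n
      have := sc_mix_le hw0 hw1 hX n
      rwa [← hv2] at this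
    have heq : payoff v2 Y X = v2/2 - m := by
      have := payoff_vs_mix hw0 hw1 hX Y
        (fun n hn => by rw [hY n]; exact mix_zero_of_gt _ _ hn)
      rwa [← hv2] at this
    linarith

end APAProof
open APAProof

/-- characterization of equilibria when `v1 ≥ v2 > 2`, `v2/2` is
not an integer and `⌊v1/2⌋ = ⌊v2/2⌋`, with `m = ⌊v2/2⌋`. -/
theorem allpay_equilibria_close_vals (v1 v2 : ℝ) (hv : v2 ≤ v1) (hv2 : 2 < v2)
    (hnonint : ¬ ∃ k : ℤ, v2 / 2 = (k : ℝ))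
    (hfl : ⌊v1 / 2⌋ = ⌊v2 / 2⌋) (m : ℕ) (hm : (m : ℤ) = ⌊v2 / 2⌋)
    (X Y : Strategy) :
    (IsNashAPA v1 v2 X Y ↔
      ((∀ n, X.p n =
          ((⌊v2 / 2⌋ : ℝ) / (v2 / 2)) * ((⌈v2 / 2⌉ : ℝ) - v2 / 2) * UO m n +
          (1 - ((⌊v2 / 2⌋ : ℝ) / (v2 / 2)) * ((⌈v2 / 2⌉ : ℝ) - v2 / 2)) * UE m n) ∧
       (∀ n, Y.p n =
          ((⌊v1 / 2⌋ : ℝ) / (v1 / 2)) * ((⌈v1 / 2⌉ : ℝ) - v1 / 2) * UO m n +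
          (1 - ((⌊v1 / 2⌋ : ℝ) / (v1 / 2)) * ((⌈v1 / 2⌉ : ℝ) - v1 / 2)) * UE m n))) ∧
    (IsNashAPA v1 v2 X Y →
      payoff v1 X Y = v1 / 2 - (⌊v2 / 2⌋ : ℝ) ∧
      payoff v2 Y X = v2 / 2 - (⌊v2 / 2⌋ : ℝ)) := by
  have hv2pos : (0:ℝ) < v2 := by linarith
  have hv1pos : (0:ℝ) < v1 := by linarith
  have hwle : ((m:ℤ):ℝ) ≤ v2/2 := by rw [hm]; exact Int.floor_le _
  have hw0 : (m:ℝ) < v2/2 := by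
    rcases lt_or_eq_of_le hwle with h | h
    · exact_mod_cast h
    · exact absurd ⟨(m:ℤ), by exact_mod_cast h.symm⟩ hnonint
  have hw1 : v2/2 < (m:ℝ) + 1 := by
    have := Int.lt_floor_add_one (v2/2)
    rw [← hm] at this
    push_cast at this
    exact this
  have hu0 : (m:ℝ) < v1/2 := lt_of_lt_of_le hw0 (by linarith)
  have hu1 : v1/2 < (m:ℝ) + 1 := by
    have := Int.lt_floor_add_one (v1/2)
    rw [hfl, ← hm] at this
    push_cast at this
    exact this
  have hmpos : (0:ℝ) < m := by linarith
  have hmne : (m:ℝ) ≠ 0 := ne_of_gt hmpos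
  have hm1ne : (m:ℝ) + 1 ≠ 0 := by positivity
  have hfl2R : ((⌊v2/2⌋ : ℤ) : ℝ) = (m:ℝ) := by rw [← hm]; push_cast; ring
  have hfl1R : ((⌊v1/2⌋ : ℤ) : ℝ) = (m:ℝ) := by rw [hfl, ← hm]; push_cast; ring
  have hcl2R : ((⌈v2/2⌉ : ℤ) : ℝ) = (m:ℝ) + 1 := by
    have : ⌈v2/2⌉ = (m:ℤ) + 1 := by
      rw [Int.ceil_eq_iff]
      push_cast
      constructor <;> linarith
    rw [this]; push_cast; ring
  have hcl1R : ((⌈v1/2⌉ : ℤ) : ℝ) = (m:ℝ) + 1 := by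
    have : ⌈v1/2⌉ = (m:ℤ) + 1 := by
      rw [Int.ceil_eq_iff]
      push_cast
      constructor <;> linarith
    rw [this]; push_cast; ring
  -- the statement's formula coincides with `mix t m`
  have hform : ∀ t : ℝ, (m:ℝ) < t → t < (m:ℝ) + 1 → ∀ n : ℕ,
      ((m:ℝ)/t) * (((m:ℝ)+1) - t) * UO m n + (1 - ((m:ℝ)/t) * (((m:ℝ)+1) - t)) * UE m n
        = mix t m n := by
    intro t ht1 ht2 n
    have h0 : (0:ℝ) < t := lt_of_le_of_lt (Nat.cast_nonneg m) ht1
    have h0ne : t ≠ 0 := ne_of_gt h0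
    unfold UO UE mix pat
    rcases Nat.even_or_odd n with he | ho
    · have hno : ¬ Odd n := Nat.not_odd_iff_even.mpr he
      rcases le_or_gt n (2*m) with h | h
      · simp only [hno, false_and, if_false, he, h, and_self, if_true, if_pos]
        field_simp
        ring
      · simp only [hno, false_and, if_false, Nat.not_le.mpr h, and_false, if_false,
          Nat.not_le.mpr h]
        simp [Nat.not_le.mpr h]
    · have hne' : ¬ Even n := Nat.not_even_iff_odd.mpr ho
      rcases lt_or_ge n (2*m) with h | h
      · have h' : n ≤ 2*m := by omega
        simp only [ho, h, and_self, if_true, hne', false_and, if_false, h', if_pos]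
        field_simp
        ring
      · have h2 : ¬ n < 2*m := Nat.not_lt.mpr h
        have h3 : ¬ n ≤ 2*m := by
          intro hc
          have : n = 2*m := by omega
          rw [this] at hne'
          exact hne' (even_two_mul m)
        simp [h2, h3, hne']
  have hFx : ∀ n : ℕ,
      ((⌊v2 / 2⌋ : ℝ) / (v2 / 2)) * ((⌈v2 / 2⌉ : ℝ) - v2 / 2) * UO m n +
        (1 - ((⌊v2 / 2⌋ : ℝ) / (v2 / 2)) * ((⌈v2 / 2⌉ : ℝ) - v2 / 2)) * UE m n
      = mix (v2/2) m n := by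
    intro n
    rw [hfl2R, hcl2R]
    exact hform (v2/2) hw0 hw1 n
  have hFy : ∀ n : ℕ,
      ((⌊v1 / 2⌋ : ℝ) / (v1 / 2)) * ((⌈v1 / 2⌉ : ℝ) - v1 / 2) * UO m n +
        (1 - ((⌊v1 / 2⌋ : ℝ) / (v1 / 2)) * ((⌈v1 / 2⌉ : ℝ) - v1 / 2)) * UE m n
      = mix (v1/2) m n := by
    intro n
    rw [hfl1R, hcl1R]
    exact hform (v1/2) hu0 hu1 n
  have hv1e : v1 = 2*(v1/2) := by ring
  have hv2e : v2 = 2*(v2/2) := by ring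
  -- main extraction: any Nash equilibrium has the mix form
  have main : IsNashAPA v1 v2 X Y →
      (∀ n, X.p n = mix (v2/2) m n) ∧ (∀ n, Y.p n = mix (v1/2) m n) := by
    intro hN
    set Xs : Strategy := mixStrat hw0 hw1 with hXsdef
    set Ys : Strategy := mixStrat hu0 hu1 with hYsdef
    have hXsP : ∀ n, Xs.p n = mix (v2/2) m n := fun n => rfl
    have hYsP : ∀ n, Ys.p n = mix (v1/2) m n := fun n => rfl
    have hNs : IsNashAPA v1 v2 Xs Ys :=
      nash_of_mix v1 v2 m hu0 hu1 hw0 hw1 Xs Ys hXsP hYsP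
    obtain ⟨hA, hB⟩ := interchange v1 v2 hv1pos hv2pos X Y Xs Ys hN hNs
    -- X part
    have hub1 : ∀ n, sc v1 Ys n ≤ v1/2 - m := by
      intro n
      have := sc_mix_le hu0 hu1 hYsP n
      rwa [← hv1e] at this
    have hXsYs : payoff v1 Xs Ys = v1/2 - m := by
      have := payoff_vs_mix hu0 hu1 hYsP Xs
        (fun n hn => by rw [hXsP n]; exact mix_zero_of_gt _ _ hn)
      rwa [← hv1e] at this
    have hXYs : payoff v1 X Ys = v1/2 - m := by
      refine le_antisymm (payoff_le _ _ _ _ hub1) ?_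
      rw [← hXsYs]
      exact hA.1 Xs
    have hXtail : ∀ n, 2*m < n → X.p n = 0 := by
      intro n hn
      apply p_eq_zero_of_lt hub1 hXYs
      have := sc_mix_lt_tail hu0 hu1 hYsP n hn
      rwa [← hv1e] at this
    have hub2 : ∀ n, sc v2 X n ≤ payoff v2 Ys X := by
      intro n
      have := hA.2 (delta n)
      rwa [payoff_delta] at this
    have hconst2 : ∀ n, n ≤ 2*m → sc v2 X n = payoff v2 Ys X := by
      intro n hn
      exact sc_eq_of_pos hub2 rfl (by rw [hYsP n]; exact mix_pos hu0 hu1 hn)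
    have hXmix : ∀ n, X.p n = mix (v2/2) m n :=
      strategy_eq_mix hw0 hw1 hv2e hconst2 hXtail
    -- Y part
    have hub3 : ∀ n, sc v2 Xs n ≤ v2/2 - m := by
      intro n
      have := sc_mix_le hw0 hw1 hXsP n
      rwa [← hv2e] at this
    have hYsXs : payoff v2 Ys Xs = v2/2 - m := by
      have := payoff_vs_mix hw0 hw1 hXsP Ys
        (fun n hn => by rw [hYsP n]; exact mix_zero_of_gt _ _ hn)
      rwa [← hv2e] at this
    have hYXs : payoff v2 Y Xs = v2/2 - m := by
      refine le_antisymm (payoff_le _ _ _ _ hub3) ?_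
      rw [← hYsXs]
      exact hB.2 Ys
    have hYtail : ∀ n, 2*m < n → Y.p n = 0 := by
      intro n hn
      apply p_eq_zero_of_lt hub3 hYXs
      have := sc_mix_lt_tail hw0 hw1 hXsP n hn
      rwa [← hv2e] at this
    have hub4 : ∀ n, sc v1 Y n ≤ payoff v1 Xs Y := by
      intro n
      have := hB.1 (delta n)
      rwa [payoff_delta] at this
    have hconst4 : ∀ n, n ≤ 2*m → sc v1 Y n = payoff v1 Xs Y := by
      intro n hn
      exact sc_eq_of_pos hub4 rfl (by rw [hXsP n]; exact mix_pos hw0 hw1 hn)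
    have hYmix : ∀ n, Y.p n = mix (v1/2) m n :=
      strategy_eq_mix hu0 hu1 hv1e hconst4 hYtail
    exact ⟨hXmix, hYmix⟩
  constructor
  · constructor
    · intro hN
      obtain ⟨h1, h2⟩ := main hN
      exact ⟨fun n => by rw [h1 n, ← hFx n], fun n => by rw [h2 n, ← hFy n]⟩
    · rintro ⟨hX, hY⟩
      exact nash_of_mix v1 v2 m hu0 hu1 hw0 hw1 X Y
        (fun n => by rw [hX n, hFx n]) (fun n => by rw [hY n, hFy n])
  · intro hN
    obtain ⟨h1, h2⟩ := main hN
    constructor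
    · rw [hfl2R]
      have := payoff_vs_mix hu0 hu1 h2 X
        (fun n hn => by rw [h1 n]; exact mix_zero_of_gt _ _ hn)
      rwa [← hv1e] at this
    · rw [hfl2R]
      have := payoff_vs_mix hw0 hw1 h1 Y
        (fun n hn => by rw [h2 n]; exact mix_zero_of_gt _ _ hn)
      rwa [← hv2e] at this
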